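/- Fix N ≥ 1, b ∈ ℝ, nonzero reals p_i, q_i with p_i⁻¹ ≠ b, q_i⁻¹ ≠ b, constants a_{i,1}, a_{i,2}, ξ_{i0}, η_{i0} ∈ ℝ, and let τ_n be the associated Casoratian. Then for every n ∈ ℤ: ∂_{x₋₁}τ_n − N·b·τ_n equals the determinant of the N×N matrix whose j-th column, for 1 ≤ j ≤ N−1, is (ψ_i^{(n+j−1)})_{i=1..N} and whose last column is (ψ_i^{(n+N)})_{i=1..N}; that is, (∂_{x₋₁} − Nb)τ_n = det[ψ^{(n)}, ψ^{(n+1)}, …, ψ^{(n+N−2)}, ψ^{(n+N)}]. -/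

import Mathlib

/-- Partial derivative in `x₁`. -/
noncomputable def pd1 (F : ℝ → ℝ → ℝ → ℝ → ℝ) : ℝ → ℝ → ℝ → ℝ → ℝ :=
  fun x1 x2 xm1 xm2 => deriv (fun t => F t x2 xm1 xm2) x1

/-- Partial derivative in `x₂`. -/
noncomputable def pd2 (F : ℝ → ℝ → ℝ → ℝ → ℝ) : ℝ → ℝ → ℝ → ℝ → ℝ :=
  fun x1 x2 xm1 xm2 => deriv (fun t => F x1 t xm1 xm2) x2

/-- Partial derivative in `x₋₁`. -/
noncomputable def pdm1 (F : ℝ → ℝ → ℝ → ℝ → ℝ) : ℝ → ℝ → ℝ → ℝ → ℝ :=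
  fun x1 x2 xm1 xm2 => deriv (fun t => F x1 x2 t xm2) xm1

/-- Partial derivative in `x₋₂`. -/
noncomputable def pdm2 (F : ℝ → ℝ → ℝ → ℝ → ℝ) : ℝ → ℝ → ℝ → ℝ → ℝ :=
  fun x1 x2 xm1 xm2 => deriv (fun t => F x1 x2 xm1 t) xm2

/-- The functions ψ_i^{(n)} of (x₁, x₂, x₋₁, x₋₂). -/
noncomputable def psi {N : ℕ} (b : ℝ) (p q a1 a2 ξ0 η0 : Fin N → ℝ)
    (i : Fin N) (n : ℤ) : ℝ → ℝ → ℝ → ℝ → ℝ :=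
  fun x1 x2 xm1 xm2 =>
    a1 i * ((p i)⁻¹ - b) ^ n *
      Real.exp (x1 / ((p i)⁻¹ - b) + x2 / ((p i)⁻¹ - b) ^ 2
        + (p i)⁻¹ * xm1 + ((p i)⁻¹) ^ 2 * xm2 + ξ0 i)
    + a2 i * ((q i)⁻¹ - b) ^ n *
      Real.exp (x1 / ((q i)⁻¹ - b) + x2 / ((q i)⁻¹ - b) ^ 2
        + (q i)⁻¹ * xm1 + ((q i)⁻¹) ^ 2 * xm2 + η0 i)

/-- The Casoratian τ_n = det[(ψ_i^{(n+j-1)})]. -/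
noncomputable def tau {N : ℕ} (b : ℝ) (p q a1 a2 ξ0 η0 : Fin N → ℝ)
    (n : ℤ) : ℝ → ℝ → ℝ → ℝ → ℝ :=
  fun x1 x2 xm1 xm2 =>
    Matrix.det (Matrix.of fun i j : Fin N =>
      psi b p q a1 a2 ξ0 η0 i (n + (j : ℕ)) x1 x2 xm1 xm2)

noncomputable def detCML (N : ℕ) :
    ContinuousMultilinearMap ℝ (fun _ : Fin N => (Fin N → ℝ)) ℝ :=
  MultilinearMap.mkContinuous
    (Matrix.detRowAlternating : (Fin N → ℝ) [⋀^Fin N]→ₗ[ℝ] ℝ).toMultilinearMap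
    (Nat.factorial N)
    (by
      intro m
      have h1 : (Matrix.detRowAlternating (R := ℝ) (n := Fin N)) m
          = Matrix.det (Matrix.of m) := rfl
      rw [AlternatingMap.coe_multilinearMap]
      show ‖Matrix.detRowAlternating m‖ ≤ _
      rw [h1, Matrix.det_apply]
      calc ‖∑ σ : Equiv.Perm (Fin N), Equiv.Perm.sign σ • ∏ i, Matrix.of m (σ i) i‖
          ≤ ∑ σ : Equiv.Perm (Fin N), ‖Equiv.Perm.sign σ • ∏ i, Matrix.of m (σ i) i‖ :=
            norm_sum_le _ _
        _ ≤ ∑ _σ : Equiv.Perm (Fin N), ∏ i, ‖m i‖ := by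
            apply Finset.sum_le_sum
            intro σ _
            have hs : ‖Equiv.Perm.sign σ • ∏ i, Matrix.of m (σ i) i‖
                = ‖∏ i, Matrix.of m (σ i) i‖ := by
              rcases Int.units_eq_one_or (Equiv.Perm.sign σ) with h | h <;>
                simp [h, Units.smul_def]
            rw [hs]
            calc ‖∏ i, Matrix.of m (σ i) i‖ ≤ ∏ i, ‖m (σ i)‖ := by
                  rw [norm_prod]
                  apply Finset.prod_le_prod (fun _ _ => norm_nonneg _)
                  intro i _
                  exact norm_le_pi_norm (m (σ i)) i
              _ = ∏ i, ‖m i‖ := Equiv.prod_comp σ (fun i => ‖m i‖)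
        _ = (Nat.factorial N : ℝ) * ∏ i, ‖m i‖ := by
            rw [Finset.sum_const, Finset.card_univ, Fintype.card_perm, Fintype.card_fin, nsmul_eq_mul])

lemma detCML_apply {N : ℕ} (m : Fin N → (Fin N → ℝ)) :
    detCML N m = Matrix.det (Matrix.of m) := rfl

lemma det_hasDerivAt {N : ℕ} (g : Fin N → ℝ → (Fin N → ℝ)) (v : Fin N → (Fin N → ℝ)) (t : ℝ)
    (hg : ∀ j, HasDerivAt (g j) (v j) t) :
    HasDerivAt (fun s => Matrix.det (Matrix.of fun j => g j s))
      (∑ j, Matrix.det (Matrix.updateRow (Matrix.of fun k => g k t) j (v j))) t := by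
  have h := HasFDerivAt.multilinear_comp (f := detCML N)
    (g := g) (g' := fun j => ContinuousLinearMap.smulRight (1 : ℝ →L[ℝ] ℝ) (v j))
    (x := t) (fun j => (hg j).hasFDerivAt)
  have h2 := h.hasDerivAt
  refine h2.congr_deriv ?_
  simp only [ContinuousLinearMap.sum_apply, ContinuousLinearMap.comp_apply,
    ContinuousLinearMap.smulRight_apply, ContinuousLinearMap.one_apply, one_smul,
    ContinuousMultilinearMap.toContinuousLinearMap_apply]
  rfl

lemma psi_hasDerivAt' (b P Q A B C1 C2 D1 D2 E1 E2 : ℝ) (m : ℤ)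
    (hP : P - b ≠ 0) (hQ : Q - b ≠ 0) (xm1 : ℝ) :
    HasDerivAt (fun t : ℝ =>
        A * (P - b) ^ m * Real.exp (C1 + P * t + C2 + E1)
        + B * (Q - b) ^ m * Real.exp (D1 + Q * t + D2 + E2))
      ((A * (P - b) ^ (m + 1) * Real.exp (C1 + P * xm1 + C2 + E1)
        + B * (Q - b) ^ (m + 1) * Real.exp (D1 + Q * xm1 + D2 + E2))
       + b * (A * (P - b) ^ m * Real.exp (C1 + P * xm1 + C2 + E1)
          + B * (Q - b) ^ m * Real.exp (D1 + Q * xm1 + D2 + E2))) xm1 := by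
  have h1 : HasDerivAt (fun t : ℝ => C1 + P * t + C2 + E1) P xm1 := by
    simpa using ((((hasDerivAt_id xm1).const_mul P).const_add C1).add_const C2).add_const E1
  have h2 : HasDerivAt (fun t : ℝ => D1 + Q * t + D2 + E2) Q xm1 := by
    simpa using ((((hasDerivAt_id xm1).const_mul Q).const_add D1).add_const D2).add_const E2
  have h3 := (h1.exp.const_mul (A * (P - b) ^ m)).add (h2.exp.const_mul (B * (Q - b) ^ m))
  refine h3.congr_deriv ?_
  rw [zpow_add_one₀ hP, zpow_add_one₀ hQ]
  ring

lemma psi_hasDerivAt_xm1 {N : ℕ} (b : ℝ) (p q a1 a2 ξ0 η0 : Fin N → ℝ)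
    (hpb : ∀ i, (p i)⁻¹ ≠ b) (hqb : ∀ i, (q i)⁻¹ ≠ b)
    (i : Fin N) (m : ℤ) (x1 x2 xm1 xm2 : ℝ) :
    HasDerivAt (fun t => psi b p q a1 a2 ξ0 η0 i m x1 x2 t xm2)
      (psi b p q a1 a2 ξ0 η0 i (m + 1) x1 x2 xm1 xm2
        + b * psi b p q a1 a2 ξ0 η0 i m x1 x2 xm1 xm2) xm1 := by
  have := psi_hasDerivAt' b (p i)⁻¹ (q i)⁻¹ (a1 i) (a2 i)
    (x1 / ((p i)⁻¹ - b) + x2 / ((p i)⁻¹ - b) ^ 2) (((p i)⁻¹) ^ 2 * xm2)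
    (x1 / ((q i)⁻¹ - b) + x2 / ((q i)⁻¹ - b) ^ 2) (((q i)⁻¹) ^ 2 * xm2)
    (ξ0 i) (η0 i) m (sub_ne_zero.mpr (hpb i)) (sub_ne_zero.mpr (hqb i)) xm1
  exact this

theorem tau_xm1_deriv_main {N : ℕ} (hN : 1 ≤ N) (b : ℝ)
    (p q a1 a2 ξ0 η0 : Fin N → ℝ)
    (hp : ∀ i, p i ≠ 0) (hq : ∀ i, q i ≠ 0)
    (hpb : ∀ i, (p i)⁻¹ ≠ b) (hqb : ∀ i, (q i)⁻¹ ≠ b) :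
    ∀ (n : ℤ) (x1 x2 xm1 xm2 : ℝ),
      pdm1 (tau b p q a1 a2 ξ0 η0 n) x1 x2 xm1 xm2
        - (N : ℝ) * b * tau b p q a1 a2 ξ0 η0 n x1 x2 xm1 xm2
      = Matrix.det (Matrix.of fun i j : Fin N =>
          psi b p q a1 a2 ξ0 η0 i
            (if (j : ℕ) = N - 1 then n + (N : ℕ) else n + (j : ℕ))
            x1 x2 xm1 xm2) := by
  obtain ⟨m, rfl⟩ : ∃ m, N = m + 1 := ⟨N - 1, by omega⟩
  intro n x1 x2 xm1 xm2
  set ψ : Fin (m+1) → ℤ → ℝ := fun i k => psi b p q a1 a2 ξ0 η0 i k x1 x2 xm1 xm2 with hψ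
  set g : Fin (m+1) → ℝ → (Fin (m+1) → ℝ) :=
    fun j t i => psi b p q a1 a2 ξ0 η0 i (n + (j : ℕ)) x1 x2 t xm2 with hg
  set v : Fin (m+1) → (Fin (m+1) → ℝ) :=
    fun j i => ψ i (n + (j : ℕ) + 1) + b * ψ i (n + (j : ℕ)) with hv
  have hgd : ∀ j, HasDerivAt (g j) (v j) xm1 := fun j =>
    hasDerivAt_pi.2 fun i => psi_hasDerivAt_xm1 b p q a1 a2 ξ0 η0 hpb hqb i _ x1 x2 xm1 xm2
  have hder := det_hasDerivAt g v xm1 hgd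
  have hτ : ∀ t, tau b p q a1 a2 ξ0 η0 n x1 x2 t xm2
      = Matrix.det (Matrix.of fun j => g j t) := by
    intro t
    rw [show (Matrix.of fun j => g j t)
        = Matrix.transpose (Matrix.of fun i j : Fin (m+1) =>
            psi b p q a1 a2 ξ0 η0 i (n + (j : ℕ)) x1 x2 t xm2) from rfl,
      Matrix.det_transpose]
    rfl
  set M : Matrix (Fin (m+1)) (Fin (m+1)) ℝ := Matrix.of fun k => g k xm1 with hM
  set w : Fin (m+1) → (Fin (m+1) → ℝ) := fun j i => ψ i (n + (j : ℕ) + 1) with hw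
  have hpd : pdm1 (tau b p q a1 a2 ξ0 η0 n) x1 x2 xm1 xm2
      = ∑ j, Matrix.det (Matrix.updateRow M j (v j)) := by
    show deriv (fun t => tau b p q a1 a2 ξ0 η0 n x1 x2 t xm2) xm1 = _
    rw [funext hτ]
    exact hder.deriv
  have hsplit : ∀ j, Matrix.det (Matrix.updateRow M j (v j))
      = Matrix.det (Matrix.updateRow M j (w j)) + b * Matrix.det M := by
    intro j
    have hvj : v j = w j + b • (M j) := by
      funext i
      simp [hv, hw, hM, hg, smul_eq_mul, hψ]
    rw [hvj, Matrix.det_updateRow_add, Matrix.det_updateRow_smul, Matrix.updateRow_eq_self]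
  have hzero : ∀ j, j ≠ Fin.last m → Matrix.det (Matrix.updateRow M j (w j)) = 0 := by
    intro j hj
    have hjm : (j : ℕ) < m := by
      have := j.isLt
      have : (j : ℕ) ≠ m := fun h => hj (Fin.ext (by simp [h]))
      omega
    set j' : Fin (m+1) := ⟨(j : ℕ) + 1, by omega⟩ with hj'
    apply Matrix.det_zero_of_row_eq (i := j) (j := j')
    · intro h
      have := congrArg Fin.val h
      simp [hj'] at this
    · have hne : j' ≠ j := by
        intro h
        have := congrArg Fin.val h
        simp [hj'] at this
      rw [Matrix.updateRow_self, Matrix.updateRow_ne hne]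
      funext i
      show ψ i (n + (j : ℕ) + 1) = g j' xm1 i
      simp only [hg, hψ, hj']
      push_cast
      ring_nf
  have hlast : Matrix.updateRow M (Fin.last m) (w (Fin.last m))
      = Matrix.transpose (Matrix.of fun i j : Fin (m+1) =>
          psi b p q a1 a2 ξ0 η0 i
            (if (j : ℕ) = m + 1 - 1 then n + ((m+1 : ℕ) : ℤ) else n + (j : ℕ))
            x1 x2 xm1 xm2) := by
    funext j i
    by_cases hj : j = Fin.last m
    · subst hj
      rw [Matrix.updateRow_self]
      show ψ i (n + ((Fin.last m : Fin (m+1)) : ℕ) + 1) = _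
      simp only [Matrix.transpose_apply, Matrix.of_apply, Fin.val_last]
      rw [if_pos (by omega)]
      show psi b p q a1 a2 ξ0 η0 i (n + (m : ℕ) + 1) x1 x2 xm1 xm2 = _
      push_cast
      ring_nf
    · rw [Matrix.updateRow_ne hj]
      show g j xm1 i = _
      have hjm : (j : ℕ) ≠ m := fun h => hj (Fin.ext (by simp [h]))
      simp only [Matrix.transpose_apply, Matrix.of_apply, hg]
      rw [if_neg (by omega)]
  have hsum : ∑ j, Matrix.det (Matrix.updateRow M j (w j))
      = Matrix.det (Matrix.updateRow M (Fin.last m) (w (Fin.last m))) := by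
    apply Finset.sum_eq_single
    · intro j _ hj
      exact hzero j hj
    · intro h
      exact absurd (Finset.mem_univ _) h
  rw [hpd]
  simp only [hsplit]
  rw [Finset.sum_add_distrib, hsum, hlast, Matrix.det_transpose, Finset.sum_const,
    Finset.card_univ, Fintype.card_fin, nsmul_eq_mul]
  have hMτ : Matrix.det M = tau b p q a1 a2 ξ0 η0 n x1 x2 xm1 xm2 := (hτ xm1).symm
  rw [hMτ]
  push_cast
  ring

/-- (∂_{x₋₁} − Nb)τ_n = |n, n+1, …, n+N−2, n+N|. -/
theorem tau_xm1_deriv {N : ℕ} (hN : 1 ≤ N) (b : ℝ)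
    (p q a1 a2 ξ0 η0 : Fin N → ℝ)
    (hp : ∀ i, p i ≠ 0) (hq : ∀ i, q i ≠ 0)
    (hpb : ∀ i, (p i)⁻¹ ≠ b) (hqb : ∀ i, (q i)⁻¹ ≠ b) :
    ∀ (n : ℤ) (x1 x2 xm1 xm2 : ℝ),
      pdm1 (tau b p q a1 a2 ξ0 η0 n) x1 x2 xm1 xm2
        - (N : ℝ) * b * tau b p q a1 a2 ξ0 η0 n x1 x2 xm1 xm2
      = Matrix.det (Matrix.of fun i j : Fin N =>
          psi b p q a1 a2 ξ0 η0 i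
            (if (j : ℕ) = N - 1 then n + (N : ℕ) else n + (j : ℕ))
            x1 x2 xm1 xm2) := by
  exact tau_xm1_deriv_main hN b p q a1 a2 ξ0 η0 hp hq hpb hqb
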